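/- In U(gl(2|1))[[t]]: [H₁, F₂] = (1/2)(T + T')F₂, [H₁, E₃] = (1/2)(T + T')E₃, and T and T' both commute with F₂ and with E₃ (i.e., [T, F₂] = [T', F₂] = [T, E₃] = [T', E₃] = 0). -/

import Mathlib

noncomputable section

namespace SuperJordanian

open scoped BigOperators

/-- The generalized binomial coefficient `C(1/2, n)`. -/
def cHalf (n : ℕ) : ℂ :=
  (∏ i ∈ Finset.range n, ((1 : ℂ) / 2 - (i : ℂ))) / (n.factorial : ℂ)

/-- Parity for `gl(2|1)`: `p(i,j) = 1` iff exactly one of `i`, `j` equals the third index. -/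
def par (i j : Fin 3) : ℕ :=
  if (i = 2 ∧ j ≠ 2) ∨ (i ≠ 2 ∧ j = 2) then 1 else 0

/-- The generator `e_{ij}` in the free algebra. -/
def gen (i j : Fin 3) : FreeAlgebra ℂ (Fin 3 × Fin 3) := FreeAlgebra.ι ℂ (i, j)

/-- Defining relations of the enveloping algebra `U(gl(2|1))`:
`e_{ij} e_{kl} - (-1)^{p(i,j)p(k,l)} e_{kl} e_{ij}
  = δ_{jk} e_{il} - (-1)^{p(i,j)p(k,l)} δ_{li} e_{kj}`. -/
inductive Rel : FreeAlgebra ℂ (Fin 3 × Fin 3) → FreeAlgebra ℂ (Fin 3 × Fin 3) → Prop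
  | mk (i j k l : Fin 3) :
      Rel (gen i j * gen k l - ((-1 : ℂ) ^ (par i j * par k l)) • (gen k l * gen i j))
        ((if j = k then gen i l else 0)
          - ((-1 : ℂ) ^ (par i j * par k l)) • (if l = i then gen k j else 0))

/-- The enveloping algebra `U = U(gl(2|1))`. -/
abbrev U : Type := RingQuot Rel

/-- The image of `e_{ij}` in `U`. -/
def e (i j : Fin 3) : U := RingQuot.mkAlgHom ℂ Rel (gen i j)

/-- The formal power series ring `U[[t]]`. -/
abbrev V : Type := PowerSeries U

/-- The central formal variable `t`. -/
def tv : V := PowerSeries.X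

/-- The inclusion `U → U[[t]]` as constant power series. -/
def C : U →+* V := PowerSeries.C (R := U)

def e₁ : U := e 0 1
def f₁ : U := e 1 0
def h₁ : U := e 0 0 - e 1 1
def e₂ : U := e 1 2
def f₂ : U := e 2 1
def h₂ : U := e 1 1 + e 2 2
def e₃ : U := e 0 2
def f₃ : U := e 2 0
def h₃ : U := h₁ + h₂

/-- `s = Σ_{n ≥ 0} C(1/2, n) t^{2n} e₁^{2n}`, so that `s² = 1 + t² e₁²`. -/
def s : V := PowerSeries.mk fun m => if m % 2 = 0 then cHalf (m / 2) • (e₁ ^ m) else 0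

def T : V := tv * C e₁ + s
def T' : V := -(tv * C e₁) + s
def H₁ : V := s * C h₁
def F₁ : V := C f₁ - ((1 : ℂ) / 4) • (tv ^ 2 * C (e₁ * (h₁ ^ 2 - 1)))
def H₂ : V := C h₂ - ((1 : ℂ) / 2) • (tv ^ 2 * C (e₁ ^ 2 * h₁))
def E₂ : V := C e₂ - ((1 : ℂ) / 4) • (tv ^ 2 * C (e₁ * e₃ * (2 * h₁ + 1)))
def F₂ : V := C f₂
def H₃ : V := C h₃ + ((1 : ℂ) / 2) • (tv ^ 2 * C (e₁ ^ 2 * h₁))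
def E₃ : V := C e₃
def F₃ : V := C f₃ + ((1 : ℂ) / 4) • (tv ^ 2 * C (e₁ * f₂ * (2 * h₁ + 1)))

/-- Commutator `[a, b] = ab - ba`. -/
def br (a b : V) : V := a * b - b * a

/-- Anticommutator `{a, b} = ab + ba`. -/
def ac (a b : V) : V := a * b + b * a



lemma e_rel (i j k l : Fin 3) :
    e i j * e k l - ((-1 : ℂ) ^ (par i j * par k l)) • (e k l * e i j) =
      (if j = k then e i l else 0)
        - ((-1 : ℂ) ^ (par i j * par k l)) • (if l = i then e k j else 0) := by
  have h := RingQuot.mkAlgHom_rel ℂ (Rel.mk i j k l)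
  simpa [e, gen, map_sub, map_smul, map_mul, apply_ite (RingQuot.mkAlgHom ℂ Rel)] using h

lemma comm_e1_f2 : e₁ * f₂ = f₂ * e₁ := by
  have h := e_rel 0 1 2 1
  simp only [par] at h
  norm_num at h
  simpa [e₁, f₂, sub_eq_zero] using h

lemma comm_e1_e3 : e₁ * e₃ = e₃ * e₁ := by
  have h := e_rel 0 1 0 2
  simp only [par] at h
  norm_num at h
  simpa [e₁, e₃, sub_eq_zero] using h

lemma comm_h1_f2 : h₁ * f₂ - f₂ * h₁ = f₂ := by
  have h1 : e 0 0 * f₂ - f₂ * e 0 0 = 0 := by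
    have h := e_rel 0 0 2 1
    simp only [par] at h; norm_num at h
    simpa [f₂, sub_eq_zero] using h
  have h2 : e 1 1 * f₂ - f₂ * e 1 1 = -f₂ := by
    have h := e_rel 1 1 2 1
    simp only [par] at h; norm_num at h
    simpa [f₂] using h
  have expand : h₁ * f₂ - f₂ * h₁ =
      (e 0 0 * f₂ - f₂ * e 0 0) - (e 1 1 * f₂ - f₂ * e 1 1) := by
    simp only [h₁, sub_mul, mul_sub]; abel
  rw [expand, h1, h2]; simp

lemma comm_h1_e3 : h₁ * e₃ - e₃ * h₁ = e₃ := by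
  have h1 : e 0 0 * e₃ - e₃ * e 0 0 = e₃ := by
    have h := e_rel 0 0 0 2
    simp only [par] at h; norm_num at h
    simpa [e₃] using h
  have h2 : e 1 1 * e₃ - e₃ * e 1 1 = 0 := by
    have h := e_rel 1 1 0 2
    simp only [par] at h; norm_num at h
    simpa [e₃, sub_eq_zero] using h
  have expand : h₁ * e₃ - e₃ * h₁ =
      (e 0 0 * e₃ - e₃ * e 0 0) - (e 1 1 * e₃ - e₃ * e 1 1) := by
    simp only [h₁, sub_mul, mul_sub]; abel
  rw [expand, h1, h2]; simp

lemma s_comm_C {a : U} (h : e₁ * a = a * e₁) : s * C a = C a * s := by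
  have hc : Commute e₁ a := h
  ext n
  simp only [s, C, PowerSeries.coeff_mul_C, PowerSeries.coeff_C_mul, PowerSeries.coeff_mk]
  split
  · rw [smul_mul_assoc, mul_smul_comm, (hc.pow_left n).eq]
  · simp

lemma C_comm_of {a b : U} (h : a * b = b * a) : C a * C b = C b * C a := by
  rw [← map_mul, ← map_mul, h]

lemma tvC_comm {a b : U} (h : a * b = b * a) :
    (tv * C a) * C b = C b * (tv * C a) := by
  have hx : C b * PowerSeries.X = PowerSeries.X * C b := (PowerSeries.commute_X (C b)).eq
  rw [tv, mul_assoc, C_comm_of h, ← mul_assoc, ← hx, mul_assoc]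

lemma hT_sum : T + T' = s + s := by rw [T, T']; abel

lemma br_H1 {x : U} (hc : e₁ * x = x * e₁) (hb : h₁ * x - x * h₁ = x) :
    br H₁ (C x) = ((1 : ℂ) / 2) • ((T + T') * C x) := by
  have hs := s_comm_C hc
  have hCb : C h₁ * C x - C x * C h₁ = C x := by
    rw [← map_mul, ← map_mul, ← map_sub, hb]
  have key : br H₁ (C x) = s * C x :=
    calc s * C h₁ * C x - C x * (s * C h₁)
        = s * (C h₁ * C x) - (C x * s) * C h₁ := by rw [mul_assoc, ← mul_assoc (C x)]
      _ = s * (C h₁ * C x) - s * (C x * C h₁) := by rw [← hs, mul_assoc]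
      _ = s * (C h₁ * C x - C x * C h₁) := by rw [← mul_sub]
      _ = s * C x := by rw [hCb]
  rw [key, hT_sum, add_mul, ← two_smul ℂ (s * C x), smul_smul]
  norm_num

lemma br_T {x : U} (hc : e₁ * x = x * e₁) : br T (C x) = 0 ∧ br T' (C x) = 0 := by
  have hs := s_comm_C hc
  have ht := tvC_comm hc
  constructor
  · rw [br, T, add_mul, mul_add, ht, hs, sub_self]
  · rw [br, T', neg_add_eq_sub, sub_mul, mul_sub, ht, hs, sub_self]

/-- the commutators of `H₁`, `T`, `T'` with `F₂` and `E₃` in `U(gl(2|1))[[t]]`. -/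
theorem statement3 :
    br H₁ F₂ = ((1 : ℂ) / 2) • ((T + T') * F₂) ∧
    br H₁ E₃ = ((1 : ℂ) / 2) • ((T + T') * E₃) ∧
    br T F₂ = 0 ∧ br T' F₂ = 0 ∧ br T E₃ = 0 ∧ br T' E₃ = 0 := by
  refine ⟨br_H1 comm_e1_f2 comm_h1_f2, br_H1 comm_e1_e3 comm_h1_e3,
    (br_T comm_e1_f2).1, (br_T comm_e1_f2).2, (br_T comm_e1_e3).1, (br_T comm_e1_e3).2⟩

end SuperJordanian
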